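/- Let X ∈ ℝ^{n×d} have full column rank with rows x₁ᵀ,…,x_nᵀ, let Q = XᵀX, and let δ ∈ {0,1}ⁿ with M(δ) = Σᵢ δᵢ xᵢxᵢᵀ positive definite. Let κ(Q) = λ_max(Q)/λ_min(Q) and suppose λ_min(M(δ)) ≥ C > 0. Then Tr[M(δ)⁻¹] ≤ (1/λ_min(Q)) [ d + (κ(Q)/C) Σᵢ (1 − δᵢ) ‖xᵢ‖₂² ]. -/

import Mathlib

open Matrix

/-- Cauchy–Schwarz inequality for the dot product of real vectors. -/
lemma dp_cs {d : ℕ} (a b : Fin d → ℝ) :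
    a ⬝ᵥ b ≤ Real.sqrt (a ⬝ᵥ a) * Real.sqrt (b ⬝ᵥ b) := by
  have := Real.sum_mul_le_sqrt_mul_sqrt Finset.univ a b
  simpa [dotProduct, sq] using this

/-- The dot product of a real vector with itself is nonnegative. -/
lemma dp_self_nonneg {d : ℕ} (a : Fin d → ℝ) : 0 ≤ a ⬝ᵥ a :=
  Finset.sum_nonneg fun _ _ => mul_self_nonneg _

/-- The smallest eigenvalue of a positive definite real matrix is positive. -/
lemma lmin_pos {d : ℕ} (hd : 0 < d) {A : Matrix (Fin d) (Fin d) ℝ} (hA : A.PosDef) :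
    0 < ⨅ j, hA.1.eigenvalues j := by
  haveI : Nonempty (Fin d) := ⟨⟨0, hd⟩⟩
  obtain ⟨j0, hj0⟩ := Finite.exists_min hA.1.eigenvalues
  exact lt_of_lt_of_le (hA.eigenvalues_pos j0) (le_ciInf hj0)

/-- Trace of a rank-one matrix times a matrix. -/
lemma trace_vecMulVec_mul {d : ℕ} (a b : Fin d → ℝ) (B : Matrix (Fin d) (Fin d) ℝ) :
    Matrix.trace (vecMulVec a b * B) = b ⬝ᵥ (B *ᵥ a) := by
  simp only [Matrix.trace, diag_apply, mul_apply, vecMulVec_apply, dotProduct, mulVec,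
    dotProduct, Finset.mul_sum]
  rw [Finset.sum_comm]
  exact Finset.sum_congr rfl fun q _ => Finset.sum_congr rfl fun p _ => by ring

/-- Rayleigh-quotient lower bound: `λ_min ‖v‖² ≤ vᵀ A v` for a Hermitian real matrix. -/
lemma rayleigh_lower {d : ℕ} {A : Matrix (Fin d) (Fin d) ℝ} (hA : A.IsHermitian)
    (v : Fin d → ℝ) :
    (⨅ j, hA.eigenvalues j) * (v ⬝ᵥ v) ≤ v ⬝ᵥ (A *ᵥ v) := by
  classical
  rcases Nat.eq_zero_or_pos d with hd | hd
  · subst hd; simp [dotProduct]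
  haveI : Nonempty (Fin d) := ⟨⟨0, hd⟩⟩
  set U : Matrix (Fin d) (Fin d) ℝ := (hA.eigenvectorUnitary : Matrix (Fin d) (Fin d) ℝ) with hU
  set w : Fin d → ℝ := star U *ᵥ v with hw
  have hUU : U * star U = 1 := (Matrix.mem_unitaryGroup_iff).mp hA.eigenvectorUnitary.2
  have hsU : Uᵀ = star U := by
    ext i j; simp [conjTranspose_apply]
  have hsU2 : (star U)ᵀ = U := by
    ext i j; simp [conjTranspose_apply]
  have hvAv : v ⬝ᵥ (A *ᵥ v) = w ⬝ᵥ (diagonal hA.eigenvalues *ᵥ w) := by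
    conv_lhs => rw [hA.spectral_theorem]
    have hco : (RCLike.ofReal ∘ hA.eigenvalues : Fin d → ℝ) = hA.eigenvalues := by
      funext j; simp
    rw [Unitary.conjStarAlgAut_apply, hco, ← mulVec_mulVec, ← mulVec_mulVec, dotProduct_mulVec,
      ← mulVec_transpose, hsU, ← hw]
  have hww : w ⬝ᵥ w = v ⬝ᵥ v := by
    conv_lhs => rw [hw, dotProduct_mulVec, ← mulVec_transpose, hsU2, ← hw,
      mulVec_mulVec, hUU, one_mulVec]
  rw [hvAv, ← hww]
  have h1 : w ⬝ᵥ (diagonal hA.eigenvalues *ᵥ w) = ∑ j, hA.eigenvalues j * (w j * w j) := by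
    simp only [dotProduct, mulVec_diagonal]
    exact Finset.sum_congr rfl fun j _ => by ring
  have h2 : w ⬝ᵥ w = ∑ j, w j * w j := rfl
  rw [h1, h2, Finset.mul_sum]
  refine Finset.sum_le_sum fun j _ => ?_
  have h3 : (⨅ j, hA.eigenvalues j) ≤ hA.eigenvalues j :=
    ciInf_le (Set.Finite.bddBelow (Set.finite_range _)) j
  exact mul_le_mul_of_nonneg_right h3 (mul_self_nonneg _)

/-- Norm bound for the inverse of a positive definite matrix:
`‖A⁻¹ v‖ ≤ λ_min⁻¹ ‖v‖`. -/
lemma inv_sqrt_bound {d : ℕ} (hd : 0 < d) {A : Matrix (Fin d) (Fin d) ℝ} (hA : A.PosDef)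
    (v : Fin d → ℝ) :
    Real.sqrt ((A⁻¹ *ᵥ v) ⬝ᵥ (A⁻¹ *ᵥ v)) ≤ (⨅ j, hA.1.eigenvalues j)⁻¹ * Real.sqrt (v ⬝ᵥ v) := by
  set lam := ⨅ j, hA.1.eigenvalues j with hlam
  have hlam0 : 0 < lam := lmin_pos hd hA
  set y := A⁻¹ *ᵥ v with hy
  have hdet : IsUnit A.det := isUnit_iff_ne_zero.mpr hA.det_pos.ne'
  have hAy : A *ᵥ y = v := by
    rw [hy, mulVec_mulVec, mul_nonsing_inv A hdet, one_mulVec]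
  have h1 : lam * (y ⬝ᵥ y) ≤ y ⬝ᵥ v := by
    have := rayleigh_lower hA.1 y
    rwa [hAy] at this
  have h2 : y ⬝ᵥ v ≤ Real.sqrt (y ⬝ᵥ y) * Real.sqrt (v ⬝ᵥ v) := dp_cs y v
  set sy := Real.sqrt (y ⬝ᵥ y) with hsy
  set sv := Real.sqrt (v ⬝ᵥ v) with hsv
  have hsy0 : 0 ≤ sy := Real.sqrt_nonneg _
  have hsv0 : 0 ≤ sv := Real.sqrt_nonneg _
  have hyy : y ⬝ᵥ y = sy * sy := (Real.mul_self_sqrt (dp_self_nonneg y)).symm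
  rcases eq_or_lt_of_le hsy0 with h | h
  · rw [← h]; positivity
  · have h3 : lam * (sy * sy) ≤ sy * sv := le_trans (by rw [← hyy]; exact h1) h2
    rw [inv_mul_eq_div, le_div_iff₀ hlam0]
    nlinarith

/-- Theorem 2 of the paper: upper bound on the A-optimality criterion `Tr[M(δ)⁻¹]`
for subsampled least squares. -/
theorem aopt_trace_bound {n d : ℕ} (hd : 0 < d)
    (X : Matrix (Fin n) (Fin d) ℝ)
    (hQ : (Xᵀ * X).PosDef)
    (δ : Fin n → ℝ) (hδ : ∀ i, δ i = 0 ∨ δ i = 1)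
    (hMδ : (∑ i, δ i • vecMulVec (X i) (X i)).PosDef)
    (C : ℝ) (hC : 0 < C)
    (hCmin : C ≤ ⨅ j, hMδ.1.eigenvalues j) :
    let lminQ : ℝ := ⨅ j, hQ.1.eigenvalues j
    let lmaxQ : ℝ := ⨆ j, hQ.1.eigenvalues j
    Matrix.trace (∑ i, δ i • vecMulVec (X i) (X i))⁻¹ ≤
      (1 / lminQ) *
        ((d : ℝ) + (lmaxQ / lminQ) / C * ∑ i, (1 - δ i) * (X i ⬝ᵥ X i)) := by
  intro lminQ lmaxQ
  classical
  haveI : Nonempty (Fin d) := ⟨⟨0, hd⟩⟩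
  set Q : Matrix (Fin d) (Fin d) ℝ := Xᵀ * X with hQdef
  set M : Matrix (Fin d) (Fin d) ℝ := ∑ i, δ i • vecMulVec (X i) (X i) with hMdef
  have hQdet : IsUnit Q.det := isUnit_iff_ne_zero.mpr hQ.det_pos.ne'
  have hMdet : IsUnit M.det := isUnit_iff_ne_zero.mpr hMδ.det_pos.ne'
  set lminM : ℝ := ⨅ j, hMδ.1.eigenvalues j with hlminMdef
  have hlminQ0 : 0 < lminQ := lmin_pos hd hQ
  have hlminM0 : 0 < lminM := lmin_pos hd hMδ
  -- nonnegativity of coefficients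
  have hcoef : ∀ i, 0 ≤ 1 - δ i := by
    intro i; rcases hδ i with h | h <;> rw [h] <;> norm_num
  -- Q as a sum of rank-one matrices
  have hQsum : Q = ∑ i, vecMulVec (X i) (X i) := by
    ext a b
    simp [hQdef, mul_apply, vecMulVec_apply, Matrix.sum_apply]
  have hQM : Q - M = ∑ i, (1 - δ i) • vecMulVec (X i) (X i) := by
    rw [hQsum, hMdef, ← Finset.sum_sub_distrib]
    exact Finset.sum_congr rfl fun i _ => by rw [sub_smul, one_smul]
  -- key identity
  have hid : M⁻¹ = Q⁻¹ + M⁻¹ * (Q - M) * Q⁻¹ := by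
    have h1 : M⁻¹ * M = 1 := nonsing_inv_mul M hMdet
    have h2 : Q * Q⁻¹ = 1 := mul_nonsing_inv Q hQdet
    have h3 : M⁻¹ * (Q - M) * Q⁻¹ = M⁻¹ - Q⁻¹ := by
      rw [mul_sub, sub_mul, h1, one_mul, mul_assoc, h2, mul_one]
    rw [h3]; abel
  -- trace decomposition
  have htr : Matrix.trace M⁻¹ =
      Matrix.trace Q⁻¹ + ∑ i, (1 - δ i) * (X i ⬝ᵥ ((Q⁻¹ * M⁻¹) *ᵥ X i)) := by
    conv_lhs => rw [hid]
    rw [trace_add]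
    congr 1
    rw [trace_mul_cycle, trace_mul_cycle, hQM, Finset.sum_mul, Finset.sum_mul, trace_sum]
    refine Finset.sum_congr rfl fun i _ => ?_
    rw [smul_mul_assoc, smul_mul_assoc, trace_smul, mul_assoc, trace_vecMulVec_mul]
    simp [smul_eq_mul]
  -- symmetry of Q⁻¹
  have hQsymm : Q⁻¹ᵀ = Q⁻¹ := by
    have h := hQ.inv.1
    rw [Matrix.IsHermitian] at h
    conv_rhs => rw [← h]
    ext a b
    simp [conjTranspose_apply]
  -- bound on each cross term
  have hterm : ∀ i, X i ⬝ᵥ ((Q⁻¹ * M⁻¹) *ᵥ X i) ≤ (X i ⬝ᵥ X i) / (lminQ * C) := by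
    intro i
    set x : Fin d → ℝ := X i with hx
    have h1 : (Q⁻¹ * M⁻¹) *ᵥ x = Q⁻¹ *ᵥ (M⁻¹ *ᵥ x) := by rw [mulVec_mulVec]
    have h2 : x ⬝ᵥ (Q⁻¹ *ᵥ (M⁻¹ *ᵥ x)) = (Q⁻¹ *ᵥ x) ⬝ᵥ (M⁻¹ *ᵥ x) := by
      rw [dotProduct_mulVec, ← mulVec_transpose, hQsymm]
    have h3 : (Q⁻¹ *ᵥ x) ⬝ᵥ (M⁻¹ *ᵥ x) ≤
        Real.sqrt ((Q⁻¹ *ᵥ x) ⬝ᵥ (Q⁻¹ *ᵥ x)) * Real.sqrt ((M⁻¹ *ᵥ x) ⬝ᵥ (M⁻¹ *ᵥ x)) :=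
      dp_cs _ _
    have h4 := inv_sqrt_bound hd hQ x
    have h5 := inv_sqrt_bound hd hMδ x
    have hsx0 : 0 ≤ Real.sqrt (x ⬝ᵥ x) := Real.sqrt_nonneg _
    have h6 : Real.sqrt ((Q⁻¹ *ᵥ x) ⬝ᵥ (Q⁻¹ *ᵥ x)) * Real.sqrt ((M⁻¹ *ᵥ x) ⬝ᵥ (M⁻¹ *ᵥ x)) ≤
        (lminQ⁻¹ * Real.sqrt (x ⬝ᵥ x)) * (lminM⁻¹ * Real.sqrt (x ⬝ᵥ x)) := by
      apply mul_le_mul h4 h5 (Real.sqrt_nonneg _)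
      positivity
    have h7 : (lminQ⁻¹ * Real.sqrt (x ⬝ᵥ x)) * (lminM⁻¹ * Real.sqrt (x ⬝ᵥ x)) =
        (Real.sqrt (x ⬝ᵥ x) * Real.sqrt (x ⬝ᵥ x)) * (lminQ⁻¹ * lminM⁻¹) := by ring
    rw [Real.mul_self_sqrt (dp_self_nonneg x)] at h7
    have h8 : (x ⬝ᵥ x) * (lminQ⁻¹ * lminM⁻¹) ≤ (x ⬝ᵥ x) / (lminQ * C) := by
      rw [div_eq_mul_inv, mul_inv]
      apply mul_le_mul_of_nonneg_left _ (dp_self_nonneg x)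
      apply mul_le_mul_of_nonneg_left _ (by positivity)
      exact inv_anti₀ hC hCmin
    rw [h1, h2]
    calc (Q⁻¹ *ᵥ x) ⬝ᵥ (M⁻¹ *ᵥ x) ≤ _ := h3
      _ ≤ _ := h6
      _ = _ := h7
      _ ≤ _ := h8
  -- diagonal bound for Q⁻¹
  have hdiag : Matrix.trace Q⁻¹ ≤ (d : ℝ) * (1 / lminQ) := by
    have hjj : ∀ j, Q⁻¹ j j ≤ 1 / lminQ := by
      intro j
      set e : Fin d → ℝ := Pi.single j 1 with he
      have hee : e ⬝ᵥ e = 1 := by simp [he, dotProduct, Pi.single_apply]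
      have hQe : Q⁻¹ j j = e ⬝ᵥ (Q⁻¹ *ᵥ e) := by
        simp [he, dotProduct, mulVec, Pi.single_apply]
      have h3 := dp_cs e (Q⁻¹ *ᵥ e)
      have h4 := inv_sqrt_bound hd hQ e
      rw [hee, Real.sqrt_one, one_mul] at h3
      rw [hee, Real.sqrt_one, mul_one] at h4
      rw [hQe, one_div]
      exact le_trans h3 h4
    calc Matrix.trace Q⁻¹ = ∑ j, Q⁻¹ j j := rfl
      _ ≤ ∑ _j : Fin d, 1 / lminQ := Finset.sum_le_sum fun j _ => hjj j
      _ = (d : ℝ) * (1 / lminQ) := by simp [mul_comm]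
  -- kappa ≥ 1
  have hkappa : 1 ≤ lmaxQ / lminQ := by
    have h1 : lminQ ≤ hQ.1.eigenvalues ⟨0, hd⟩ :=
      ciInf_le (Set.Finite.bddBelow (Set.finite_range _)) _
    have h2 : hQ.1.eigenvalues ⟨0, hd⟩ ≤ lmaxQ :=
      le_ciSup (Set.Finite.bddAbove (Set.finite_range _)) _
    rw [le_div_iff₀ hlminQ0, one_mul]
    exact h1.trans h2
  -- sum nonneg
  have hS : 0 ≤ ∑ i, (1 - δ i) * (X i ⬝ᵥ X i) :=
    Finset.sum_nonneg fun i _ => mul_nonneg (hcoef i) (dp_self_nonneg _)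
  -- assemble
  have hmain : Matrix.trace M⁻¹ ≤
      (d : ℝ) * (1 / lminQ) + (∑ i, (1 - δ i) * (X i ⬝ᵥ X i)) / (lminQ * C) := by
    rw [htr]
    apply add_le_add hdiag
    rw [Finset.sum_div]
    refine Finset.sum_le_sum fun i _ => ?_
    rw [mul_div_assoc]
    exact mul_le_mul_of_nonneg_left (hterm i) (hcoef i)
  refine hmain.trans ?_
  set S := ∑ i, (1 - δ i) * (X i ⬝ᵥ X i) with hSdef
  have e1 : (d : ℝ) * (1 / lminQ) = (1 / lminQ) * (d : ℝ) := by ring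
  have e2 : S / (lminQ * C) = (1 / lminQ) * (1 / C * S) := by ring
  rw [mul_add, e1, e2]
  apply add_le_add le_rfl
  apply mul_le_mul_of_nonneg_left _ (le_of_lt (one_div_pos.mpr hlminQ0))
  apply mul_le_mul_of_nonneg_right _ hS
  exact (div_le_div_iff_of_pos_right hC).mpr hkappa
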